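/- Diminishing returns: letting V(h) denote the maximum of v(X) over X ⊆ C with |X| ≤ h, the sequence V is concave: V(h) − V(h−1) ≥ V(h+1) − V(h) for h = 2,…,m−1. -/

import Mathlib

noncomputable def val (f t : ℕ → ℝ) (X : Finset ℕ) : ℝ :=
  ∑ j ∈ X, f j * t j * ∏ i ∈ X.filter (fun i => j < i), (1 - f i)

namespace Stmt13

lemma val_union (f t : ℕ → ℝ) {L U : Finset ℕ} (h : ∀ l ∈ L, ∀ u ∈ U, l < u) :
    val f t (L ∪ U) = val f t U + (∏ i ∈ U, (1 - f i)) * val f t L := by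
  have hdisj : Disjoint L U :=
    Finset.disjoint_left.mpr fun a haL haU => lt_irrefl a (h a haL a haU)
  unfold val
  rw [Finset.sum_union hdisj, add_comm, Finset.mul_sum]
  congr 1
  · apply Finset.sum_congr rfl
    intro j hj
    have he : (L ∪ U).filter (fun i => j < i) = U.filter (fun i => j < i) := by
      rw [Finset.filter_union]
      have hL : L.filter (fun i => j < i) = ∅ :=
        Finset.filter_eq_empty_iff.mpr fun l hl => not_lt.mpr (h l hl j hj).le
      rw [hL, Finset.empty_union]
    rw [he]
  · apply Finset.sum_congr rfl
    intro j hj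
    have he : (L ∪ U).filter (fun i => j < i) = L.filter (fun i => j < i) ∪ U := by
      rw [Finset.filter_union]
      congr 1
      exact Finset.filter_true_of_mem fun u hu => h j hj u hu
    rw [he, Finset.prod_union (hdisj.mono (Finset.filter_subset _ _) le_rfl)]
    ring

lemma val_singleton (f t : ℕ → ℝ) (s : ℕ) : val f t {s} = f s * t s := by
  simp [val, Finset.filter_singleton]

lemma filter_lt_union_filter_gt {X : Finset ℕ} {s : ℕ} (hs : s ∉ X) :
    X.filter (fun i => i < s) ∪ X.filter (fun i => s < i) = X := by
  ext x
  simp only [Finset.mem_union, Finset.mem_filter]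
  constructor
  · rintro (⟨h, _⟩ | ⟨h, _⟩) <;> exact h
  · intro hx
    rcases lt_trichotomy x s with h | h | h
    · exact Or.inl ⟨hx, h⟩
    · exact absurd (h ▸ hx) hs
    · exact Or.inr ⟨hx, h⟩

lemma val_cut (f t : ℕ → ℝ) {X : Finset ℕ} {s : ℕ} (hs : s ∉ X) :
    val f t X = val f t (X.filter (fun i => s < i)) +
      (∏ i ∈ X.filter (fun i => s < i), (1 - f i)) * val f t (X.filter (fun i => i < s)) := by
  conv_lhs => rw [← filter_lt_union_filter_gt hs]
  exact val_union f t fun l hl u hu =>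
    lt_trans (Finset.mem_filter.mp hl).2 (Finset.mem_filter.mp hu).2

lemma prod_cut (f : ℕ → ℝ) {X : Finset ℕ} {s : ℕ} (hs : s ∉ X) :
    ∏ i ∈ X, (1 - f i) = (∏ i ∈ X.filter (fun i => i < s), (1 - f i)) *
      ∏ i ∈ X.filter (fun i => s < i), (1 - f i) := by
  conv_lhs => rw [← filter_lt_union_filter_gt hs]
  apply Finset.prod_union
  exact Finset.disjoint_left.mpr fun a ha ha' =>
    lt_asymm (Finset.mem_filter.mp ha).2 (Finset.mem_filter.mp ha').2

lemma val_insert (f t : ℕ → ℝ) {Y : Finset ℕ} {s : ℕ} (hs : s ∉ Y) :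
    val f t (insert s Y) = val f t (Y.filter (fun i => s < i)) +
      (∏ i ∈ Y.filter (fun i => s < i), (1 - f i)) *
        (f s * t s + (1 - f s) * val f t (Y.filter (fun i => i < s))) := by
  have h1 : insert s Y = (insert s (Y.filter (fun i => i < s))) ∪ Y.filter (fun i => s < i) := by
    conv_lhs => rw [← filter_lt_union_filter_gt hs]
    rw [Finset.insert_union]
  have hcond : ∀ l ∈ insert s (Y.filter (fun i => i < s)), ∀ u ∈ Y.filter (fun i => s < i), l < u := by
    intro l hl u hu
    have hu' := (Finset.mem_filter.mp hu).2
    rcases Finset.mem_insert.mp hl with rfl | hl'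
    · exact hu'
    · exact lt_trans (Finset.mem_filter.mp hl').2 hu'
  rw [h1, val_union f t hcond]
  have h2 : val f t (insert s (Y.filter (fun i => i < s)))
      = f s * t s + (1 - f s) * val f t (Y.filter (fun i => i < s)) := by
    have h3 : insert s (Y.filter (fun i => i < s)) = (Y.filter (fun i => i < s)) ∪ {s} := by
      rw [Finset.insert_eq, Finset.union_comm]
    rw [h3, val_union f t (fun l hl u hu => by
      rcases Finset.mem_singleton.mp hu
      exact (Finset.mem_filter.mp hl).2), val_singleton, Finset.prod_singleton]
  rw [h2]

lemma val_fallback_le (f t : ℕ → ℝ) (c c' : ℝ) (W : Finset ℕ) :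
    (∀ j ∈ W, 0 ≤ f j ∧ f j ≤ 1) → (∀ j ∈ W, t j ≤ c) → 0 ≤ c' → c' ≤ c →
    val f t W + (∏ i ∈ W, (1 - f i)) * c' ≤ c := by
  induction W using Finset.induction_on_max with
  | empty =>
    intro _ _ _ hcc
    simpa [val] using hcc
  | insert a W ha ih =>
    intro hf htc h0 hcc
    have haW : a ∉ W := fun h => lt_irrefl a (ha a h)
    have h1 : insert a W = W ∪ {a} := by rw [Finset.insert_eq, Finset.union_comm]
    have hfa := hf a (Finset.mem_insert_self a W)
    have hta := htc a (Finset.mem_insert_self a W)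
    have hIH := ih (fun j hj => hf j (Finset.mem_insert_of_mem hj))
      (fun j hj => htc j (Finset.mem_insert_of_mem hj)) h0 hcc
    rw [h1, val_union f t (fun l hl u hu => by
        rcases Finset.mem_singleton.mp hu; exact ha l hl),
      val_singleton, Finset.prod_union (Finset.disjoint_singleton_right.mpr haW),
      Finset.prod_singleton]
    nlinarith [hIH, hfa.1, hfa.2, hta]

lemma val_nonneg (f t : ℕ → ℝ) (W : Finset ℕ)
    (hf : ∀ j ∈ W, 0 ≤ f j ∧ f j ≤ 1) (ht : ∀ j ∈ W, 0 ≤ t j) :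
    0 ≤ val f t W := by
  apply Finset.sum_nonneg
  intro j hj
  apply mul_nonneg (mul_nonneg (hf j hj).1 (ht j hj))
  apply Finset.prod_nonneg
  intro i hi
  have := (hf i (Finset.mem_of_mem_filter i hi)).2
  linarith


lemma val_insert_ge (f t : ℕ → ℝ) (hmono : Monotone t) {Y : Finset ℕ} {e s : ℕ}
    (hf : ∀ j ∈ insert e Y, 0 ≤ f j ∧ f j ≤ 1)
    (hts : 0 ≤ t s) (hse : s < e) (he : e ∉ Y) :
    val f t Y + (∏ i ∈ Y, (1 - f i)) * (f e * t s) ≤ val f t (insert e Y) := by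
  rw [val_insert f t he, val_cut f t he, prod_cut f he]
  set U := Y.filter (fun i => e < i) with hU
  set L := Y.filter (fun i => i < e) with hL
  set pU := ∏ i ∈ U, (1 - f i) with hpU
  set pL := ∏ i ∈ L, (1 - f i) with hpL
  have hfe := hf e (Finset.mem_insert_self e Y)
  have hpU0 : 0 ≤ pU := by
    apply Finset.prod_nonneg
    intro i hi
    have := (hf i (Finset.mem_insert_of_mem (Finset.mem_of_mem_filter i hi))).2
    linarith
  have hpL0 : 0 ≤ pL := by
    apply Finset.prod_nonneg
    intro i hi
    have := (hf i (Finset.mem_insert_of_mem (Finset.mem_of_mem_filter i hi))).2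
    linarith
  have hfb : val f t L + pL * t s ≤ t e := by
    apply val_fallback_le f t (t e) (t s) L
    · intro j hj; exact hf j (Finset.mem_insert_of_mem (Finset.mem_of_mem_filter j hj))
    · intro j hj; exact hmono (le_of_lt (Finset.mem_filter.mp hj).2)
    · exact hts
    · exact hmono hse.le
  nlinarith [mul_nonneg hpU0 hfe.1]

lemma lemD (f t : ℕ → ℝ) (hmono : Monotone t) {s : ℕ} (hts : 0 ≤ t s)
    (P D : Finset ℕ) :
    (∀ j ∈ P ∪ D, 0 ≤ f j ∧ f j ≤ 1) → (∀ x ∈ D, s < x) → Disjoint P D →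
    val f t P + ((∏ i ∈ P, (1 - f i)) - ∏ i ∈ P ∪ D, (1 - f i)) * t s ≤ val f t (P ∪ D) := by
  induction D using Finset.induction_on with
  | empty => intro _ _ _; simp
  | insert a D' ha ih =>
    intro hf hD hdisj
    have haP : a ∉ P := fun h =>
      (Finset.disjoint_left.mp hdisj h) (Finset.mem_insert_self a D')
    have haPD : a ∉ P ∪ D' := by
      simp only [Finset.mem_union]
      rintro (h | h)
      exacts [haP h, ha h]
    have hunion : P ∪ insert a D' = insert a (P ∪ D') := by
      rw [Finset.union_insert]
    have hIH := ih (fun j hj => hf j (by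
        rcases Finset.mem_union.mp hj with h | h
        · exact Finset.mem_union_left _ h
        · exact Finset.mem_union_right _ (Finset.mem_insert_of_mem h)))
      (fun x hx => hD x (Finset.mem_insert_of_mem hx))
      (hdisj.mono_right (Finset.subset_insert a D'))
    have hgain := val_insert_ge f t hmono (Y := P ∪ D') (e := a) (s := s)
      (by rw [← hunion]; exact hf) hts (hD a (Finset.mem_insert_self a D')) haPD
    rw [hunion, Finset.prod_insert haPD]
    have hfa := hf a (Finset.mem_union_right _ (Finset.mem_insert_self a D'))
    nlinarith [hIH, hgain]

lemma val_erase_of_one (f t : ℕ → ℝ) {S : Finset ℕ} {s u : ℕ}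
    (hs : s ∈ S) (hu : u ∈ S) (hus : u < s) (hfs : f s = 1) :
    val f t (S.erase u) = val f t S := by
  have hsY : s ∈ S.erase u := Finset.mem_erase.mpr ⟨hus.ne', hs⟩
  have huY : u ∉ S.erase u := Finset.notMem_erase u S
  have hins : S = insert u (S.erase u) := (Finset.insert_erase hu).symm
  have hπ : (∏ i ∈ (S.erase u).filter (fun i => u < i), (1 - f i)) = 0 :=
    Finset.prod_eq_zero (Finset.mem_filter.mpr ⟨hsY, hus⟩) (by rw [hfs]; ring)
  have h1 : val f t (S.erase u) = val f t ((S.erase u).filter (fun i => u < i)) := by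
    rw [val_cut f t huY, hπ]; ring
  have h2 : val f t S = val f t ((S.erase u).filter (fun i => u < i)) := by
    conv_lhs => rw [hins]
    rw [val_insert f t huY, hπ]; ring
  rw [h1, h2]

end Stmt13

/-- diminishing returns (concavity of the optimal valuation). -/
theorem stmt_13 (m : ℕ) (f t : ℕ → ℝ) (V : ℕ → ℝ)
    (hf : ∀ j ∈ Finset.Icc 1 m, 0 < f j ∧ f j ≤ 1)
    (ht : ∀ j ∈ Finset.Icc 1 m, 0 ≤ t j) (hmono : Monotone t)
    (hV : ∀ h, IsGreatest {v | ∃ X ⊆ Finset.Icc 1 m, X.card ≤ h ∧ val f t X = v} (V h)) :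
    ∀ h, 2 ≤ h → h + 1 ≤ m → V (h + 1) - V h ≤ V h - V (h - 1) := by
  intro h hh2 _
  obtain ⟨S, hSsub, hScard, hSval⟩ := (hV (h + 1)).1
  obtain ⟨T, hTsub, hTcard, hTval⟩ := (hV (h - 1)).1
  -- V is monotone where we need it
  have hVmono : V (h - 1) ≤ V h := (hV h).2 ⟨T, hTsub, le_trans hTcard (by omega), hTval⟩
  by_cases hc : S.card ≤ h
  · have hle : V (h + 1) ≤ V h := (hV h).2 ⟨S, hSsub, hc, hSval⟩
    linarith
  have hScard' : S.card = h + 1 := by omega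
  have hST : (S \ T).Nonempty := by
    rw [Finset.sdiff_nonempty]
    intro hsub
    have := Finset.card_le_card hsub
    omega
  set s := (S \ T).max' hST with hsdef
  have hsmem := (S \ T).max'_mem hST
  have hsS : s ∈ S := (Finset.mem_sdiff.mp hsmem).1
  have hsT : s ∉ T := (Finset.mem_sdiff.mp hsmem).2
  have hsIcc : s ∈ Finset.Icc 1 m := hSsub hsS
  have hsmax : ∀ x ∈ S, s < x → x ∈ T := by
    intro x hx hlt
    by_contra hxT
    have hxmem : x ∈ S \ T := Finset.mem_sdiff.mpr ⟨hx, hxT⟩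
    have := Finset.le_max' _ x hxmem
    omega
  set P := S.filter (fun i => s < i) with hPdef
  have hPT : P ⊆ T.filter (fun i => s < i) := by
    intro x hx
    obtain ⟨hxS, hxlt⟩ := Finset.mem_filter.mp hx
    exact Finset.mem_filter.mpr ⟨hsmax x hxS hxlt, hxlt⟩
  have hPcard : P.card ≤ h - 1 :=
    le_trans (Finset.card_le_card (hPT.trans (Finset.filter_subset _ _))) hTcard
  by_cases hf1 : f s = 1
  · -- degenerate case: drop a useless low element of S
    have hexu : ∃ u ∈ S, u < s := by
      by_contra hno
      push_neg at hno
      have hsub2 : S ⊆ insert s P := by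
        intro x hx
        rcases eq_or_lt_of_le (hno x hx) with heq | hlt
        · exact heq ▸ Finset.mem_insert_self s P
        · exact Finset.mem_insert_of_mem (Finset.mem_filter.mpr ⟨hx, hlt⟩)
      have h1 := Finset.card_le_card hsub2
      have h2 := Finset.card_insert_le s P
      omega
    obtain ⟨u, huS, hus⟩ := hexu
    have hval : val f t (S.erase u) = val f t S := Stmt13.val_erase_of_one f t hsS huS hus hf1
    have hle : V (h + 1) ≤ V h := by
      apply (hV h).2
      refine ⟨S.erase u, (Finset.erase_subset u S).trans hSsub, ?_, ?_⟩
      · rw [Finset.card_erase_of_mem huS]; omega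
      · rw [hval, hSval]
    linarith
  -- main case : f s < 1
  have hfs := hf s hsIcc
  have hfs1 : f s < 1 := lt_of_le_of_ne hfs.2 hf1
  set A := S.erase s with hAdef
  set B := insert s T with hBdef
  have hsA : s ∉ A := Finset.notMem_erase s S
  have hBsub : B ⊆ Finset.Icc 1 m := Finset.insert_subset hsIcc hTsub
  have hBcard : B.card ≤ h := le_trans (Finset.card_insert_le s T) (by omega)
  have hAcard : A.card ≤ h := by
    rw [hAdef, Finset.card_erase_of_mem hsS]; omega
  have hAV : val f t A ≤ V h :=
    (hV h).2 ⟨A, (Finset.erase_subset s S).trans hSsub, hAcard, rfl⟩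
  have hBV : val f t B ≤ V h := (hV h).2 ⟨B, hBsub, hBcard, rfl⟩
  have hOpt1 : val f t B ≤ val f t S := by
    rw [hSval]
    exact (hV (h + 1)).2 ⟨B, hBsub, by omega, rfl⟩
  -- decompositions
  set T' := T.filter (fun i => s < i) with hT'def
  set Tlo := T.filter (fun i => i < s) with hTlodef
  set Slo := S.filter (fun i => i < s) with hSlodef
  have hfilA1 : A.filter (fun i => s < i) = P := by
    rw [hAdef, hPdef]
    ext x
    simp only [Finset.mem_filter, Finset.mem_erase]
    constructor
    · rintro ⟨⟨_, hxS⟩, hlt⟩; exact ⟨hxS, hlt⟩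
    · rintro ⟨hxS, hlt⟩; exact ⟨⟨ne_of_gt hlt, hxS⟩, hlt⟩
  have hfilA2 : A.filter (fun i => i < s) = Slo := by
    rw [hAdef, hSlodef]
    ext x
    simp only [Finset.mem_filter, Finset.mem_erase]
    constructor
    · rintro ⟨⟨_, hxS⟩, hlt⟩; exact ⟨hxS, hlt⟩
    · rintro ⟨hxS, hlt⟩; exact ⟨⟨ne_of_lt hlt, hxS⟩, hlt⟩
  set pP := ∏ i ∈ P, (1 - f i) with hpPdef
  set pT := ∏ i ∈ T', (1 - f i) with hpTdef
  have hSA : S = insert s A := (Finset.insert_erase hsS).symm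
  have hdecS : val f t S = val f t P + pP * (f s * t s + (1 - f s) * val f t Slo) := by
    conv_lhs => rw [hSA]
    rw [Stmt13.val_insert f t hsA, hfilA1, hfilA2]
  have hdecA : val f t A = val f t P + pP * val f t Slo := by
    rw [Stmt13.val_cut f t hsA, hfilA1, hfilA2]
  have hdecT : val f t T = val f t T' + pT * val f t Tlo := Stmt13.val_cut f t hsT
  have hdecB : val f t B = val f t T' + pT * (f s * t s + (1 - f s) * val f t Tlo) :=
    Stmt13.val_insert f t hsT
  -- Lemma D : val T' ≥ val P + (pP - pT) * t s
  have hunionD : P ∪ (T' \ P) = T' := Finset.union_sdiff_of_subset hPT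
  have hD : val f t P + (pP - pT) * t s ≤ val f t T' := by
    have := Stmt13.lemD f t hmono (s := s) (ht s hsIcc) P (T' \ P)
      (by
        rw [hunionD]
        intro j hj
        have hj' : j ∈ Finset.Icc 1 m := hTsub (Finset.mem_of_mem_filter j hj)
        exact ⟨(hf j hj').1.le, (hf j hj').2⟩)
      (fun x hx => (Finset.mem_filter.mp (Finset.mem_sdiff.mp hx).1).2)
      (Finset.disjoint_sdiff)
    rwa [hunionD] at this
  -- key inequality after cancelling (1 - f s)
  have hposs : (0:ℝ) < 1 - f s := by linarith
  have hkey0 : (1 - f s) * ((pP - pT) * t s + pT * val f t Tlo)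
      ≤ (1 - f s) * (pP * val f t Slo) := by
    rw [hdecB, hdecS] at hOpt1
    nlinarith [hOpt1, hD]
  have hkey : (pP - pT) * t s + pT * val f t Tlo ≤ pP * val f t Slo :=
    le_of_mul_le_mul_left hkey0 hposs
  have hexch : val f t S + val f t T ≤ val f t A + val f t B := by
    have hprod : 0 ≤ f s * (pP * val f t Slo - ((pP - pT) * t s + pT * val f t Tlo)) :=
      mul_nonneg hfs.1.le (by linarith)
    rw [hdecS, hdecT, hdecA, hdecB]
    nlinarith [hprod]
  have hfinal : V (h + 1) + V (h - 1) ≤ V h + V h := by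
    rw [← hSval, ← hTval]
    linarith
  linarith
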